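/- For every natural number k ≥ 1, ∫_0^1 (ln x)^k / (1 + x) dx = (−1)^k · k! · (2^k − 1)/2^k · ζ(k+1). -/

import Mathlib

open MeasureTheory Real

lemma aux1 (k : ℕ) {c : ℝ} (hc : 0 < c) :
    ∫ t in Set.Ioi (0:ℝ), t ^ k * Real.exp (-(c * t)) = (k.factorial : ℝ) / c ^ (k+1) := by
  have h := integral_rpow_mul_exp_neg_mul_rpow (p := 1) (q := (k:ℝ)) (b := c) one_pos
    (neg_one_lt_zero.trans_le (Nat.cast_nonneg k)) hc
  simp only [Real.rpow_one, Real.rpow_natCast, div_one, neg_mul] at h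
  rw [h, Real.Gamma_nat_eq_factorial, Real.rpow_neg hc.le]
  rw [show ((k:ℝ) + 1) = ((k+1 : ℕ) : ℝ) by push_cast; ring, Real.rpow_natCast]
  ring

lemma himg : (fun t : ℝ => Real.exp (-t)) '' Set.Ioi 0 = Set.Ioo (0:ℝ) 1 := by
  ext y
  constructor
  · rintro ⟨t, ht, rfl⟩
    exact ⟨Real.exp_pos _, Real.exp_lt_one_iff.mpr (by simpa using ht)⟩
  · rintro ⟨h0, h1⟩
    exact ⟨-Real.log y, by simpa using Real.log_neg h0 h1, by simp [Real.exp_log h0]⟩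

lemma hderiv : ∀ t ∈ Set.Ioi (0:ℝ), HasDerivWithinAt (fun t : ℝ => Real.exp (-t))
    (-Real.exp (-t)) (Set.Ioi 0) t := by
  intro t _
  simpa [Function.comp_def] using ((Real.hasDerivAt_exp (-t)).comp t (hasDerivAt_neg t)).hasDerivWithinAt

lemma hinj : Set.InjOn (fun t : ℝ => Real.exp (-t)) (Set.Ioi 0) := by
  intro a _ b _ h
  simpa using Real.exp_injective h

lemma key (n k : ℕ) (t : ℝ) :
    |(-Real.exp (-t))| • ((fun x : ℝ => x ^ n * Real.log x ^ k) (Real.exp (-t)))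
      = (-1:ℝ)^k * (t ^ k * Real.exp (-(((n:ℝ)+1) * t))) := by
  simp only [abs_neg, abs_of_pos (Real.exp_pos _), smul_eq_mul, Real.log_exp]
  rw [← Real.exp_nat_mul, show Real.exp (-t) * (Real.exp ((n:ℝ) * -t) * (-t)^k)
      = (Real.exp (-t) * Real.exp ((n:ℝ)*(-t))) * (-t)^k by ring, ← Real.exp_add, neg_pow]
  ring_nf

lemma aux2 (n k : ℕ) :
    ∫ x in Set.Ioo (0:ℝ) 1, x ^ n * Real.log x ^ k
      = (-1:ℝ)^k * (k.factorial : ℝ) / ((n:ℝ)+1) ^ (k+1) := by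
  rw [← himg, integral_image_eq_integral_abs_deriv_smul measurableSet_Ioi hderiv hinj]
  simp_rw [key n k]
  rw [integral_const_mul, aux1 k (by positivity)]
  ring

lemma aux1' (k : ℕ) {c : ℝ} (hc : 0 < c) :
    IntegrableOn (fun t : ℝ => t ^ k * Real.exp (-(c * t))) (Set.Ioi 0) := by
  have h := integrableOn_rpow_mul_exp_neg_mul_rpow (p := 1) (s := (k:ℝ)) (b := c)
    (neg_one_lt_zero.trans_le (Nat.cast_nonneg k)) one_pos hc
  simpa [Real.rpow_natCast] using h

lemma aux2' (n k : ℕ) :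
    IntegrableOn (fun x : ℝ => x ^ n * Real.log x ^ k) (Set.Ioo 0 1) := by
  rw [← himg, integrableOn_image_iff_integrableOn_abs_deriv_smul measurableSet_Ioi hderiv hinj]
  simp_rw [key n k]
  exact (aux1' k (show (0:ℝ) < (n:ℝ)+1 by positivity)).const_mul _

theorem integral_pow_log_div_one_add (k : ℕ) (hk : 1 ≤ k) :
    ∫ x in Set.Ioo (0 : ℝ) 1, (Real.log x) ^ k / (1 + x)
      = (-1 : ℝ) ^ k * (k.factorial : ℝ) * ((2 ^ k - 1) / 2 ^ k) *
        ∑' n : ℕ, (1 : ℝ) / (n + 1) ^ (k + 1) := by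
  -- summability facts
  have hσ : Summable (fun n : ℕ => (1:ℝ)/((n:ℝ)+1)^(k+1)) := by
    have h : Summable (fun n : ℕ => (1:ℝ)/(n:ℝ)^(k+1)) :=
      summable_one_div_nat_pow.mpr (by omega)
    have := (summable_nat_add_iff (f := fun n : ℕ => (1:ℝ)/(n:ℝ)^(k+1)) 1).mpr h
    exact this.congr fun n => by push_cast; ring
  have hinj2 : Function.Injective (fun n : ℕ => 2*n) := fun a b h => by
    simp only [] at h; omega
  have hinj2' : Function.Injective (fun n : ℕ => 2*n+1) := fun a b h => by
    simp only [] at h; omega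
  have hodd : Summable (fun n : ℕ => (1:ℝ)/(2*(n:ℝ)+1)^(k+1)) := by
    have := hσ.comp_injective hinj2
    exact this.congr fun n => by simp only [Function.comp]; push_cast; ring_nf
  have heven : Summable (fun n : ℕ => (1:ℝ)/(2*(n:ℝ)+2)^(k+1)) := by
    have := hσ.comp_injective hinj2'
    exact this.congr fun n => by simp only [Function.comp]; push_cast; ring_nf
  set F : ℕ → ℝ → ℝ := fun n x => Real.log x ^ k * (x^(2*n) - x^(2*n+1)) with hF
  have hFeq : ∀ n : ℕ, F n = fun x : ℝ =>
      x ^ (2*n) * Real.log x ^ k - x ^ (2*n+1) * Real.log x ^ k := by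
    intro n; funext x; simp only [hF]; ring
  have hFint : ∀ n, IntegrableOn (F n) (Set.Ioo 0 1) := by
    intro n; rw [hFeq n]; exact (aux2' (2*n) k).sub (aux2' (2*n+1) k)
  have hFval : ∀ n, (∫ x in Set.Ioo (0:ℝ) 1, F n x)
      = (-1:ℝ)^k * (k.factorial : ℝ) *
        ((1:ℝ)/(2*(n:ℝ)+1)^(k+1) - (1:ℝ)/(2*(n:ℝ)+2)^(k+1)) := by
    intro n
    rw [hFeq n, integral_sub (aux2' _ k) (aux2' _ k), aux2, aux2]
    push_cast; ring
  have h1k : ((-1:ℝ))^k * (-1)^k = 1 := by rw [← mul_pow]; norm_num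
  have hFnorm : ∀ n, (∫ x in Set.Ioo (0:ℝ) 1, ‖F n x‖)
      = (-1:ℝ)^k * ∫ x in Set.Ioo (0:ℝ) 1, F n x := by
    intro n
    rw [← integral_const_mul]
    refine setIntegral_congr_fun measurableSet_Ioo fun x hx => ?_
    obtain ⟨hx0, hx1⟩ := hx
    have hlog : Real.log x ≤ 0 := Real.log_nonpos hx0.le hx1.le
    have hd : 0 ≤ x^(2*n) - x^(2*n+1) := by
      have := pow_le_pow_of_le_one hx0.le hx1.le (show 2*n ≤ 2*n+1 by omega)
      linarith
    simp only [hF, Real.norm_eq_abs, abs_mul, abs_pow, abs_of_nonpos hlog, abs_of_nonneg hd]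
    rw [neg_pow]; ring
  have hsumnorm : Summable (fun n => ∫ x in Set.Ioo (0:ℝ) 1, ‖F n x‖) := by
    have heq : (fun n => ∫ x in Set.Ioo (0:ℝ) 1, ‖F n x‖)
        = fun n : ℕ => (k.factorial : ℝ) *
          ((1:ℝ)/(2*(n:ℝ)+1)^(k+1) - (1:ℝ)/(2*(n:ℝ)+2)^(k+1)) := by
      funext n
      rw [hFnorm n, hFval n]
      linear_combination ((k.factorial : ℝ) *
        ((1:ℝ)/(2*(n:ℝ)+1)^(k+1) - (1:ℝ)/(2*(n:ℝ)+2)^(k+1))) * h1k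
    rw [heq]
    exact (hodd.sub heven).mul_left _
  -- swap integral and sum
  have hswap : (∫ x in Set.Ioo (0:ℝ) 1, ∑' n, F n x)
      = ∑' n, ∫ x in Set.Ioo (0:ℝ) 1, F n x :=
    (integral_tsum_of_summable_integral_norm hFint hsumnorm).symm
  -- pointwise series identity
  have hpt : ∀ x ∈ Set.Ioo (0:ℝ) 1, Real.log x ^ k / (1 + x) = ∑' n, F n x := by
    intro x hx
    obtain ⟨hx0, hx1⟩ := hx
    have hx2 : x^2 < 1 := by nlinarith
    have hgeo : ∑' n : ℕ, (x^2)^n = (1 - x^2)⁻¹ :=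
      tsum_geometric_of_lt_one (by positivity) hx2
    have hterm : ∀ n : ℕ, F n x = (Real.log x ^ k * (1 - x)) * (x^2)^n := by
      intro n
      simp only [hF, pow_succ, pow_mul]
      ring
    calc Real.log x ^ k / (1 + x)
        = (Real.log x ^ k * (1 - x)) * (1 - x^2)⁻¹ := by
          have hne1 : (1:ℝ) - x ≠ 0 := by linarith
          have hne2 : (1:ℝ) + x ≠ 0 := by linarith
          rw [show (1:ℝ) - x^2 = (1-x)*(1+x) by ring, mul_inv, mul_assoc,
            ← mul_assoc (1-x), mul_inv_cancel₀ hne1, one_mul, div_eq_mul_inv]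
      _ = ∑' n : ℕ, (Real.log x ^ k * (1 - x)) * (x^2)^n := by rw [tsum_mul_left, hgeo]
      _ = ∑' n, F n x := tsum_congr fun n => (hterm n).symm
  rw [setIntegral_congr_fun measurableSet_Ioo hpt, hswap]
  -- evaluate the sum
  have hOE : (∑' n : ℕ, (1:ℝ)/(2*(n:ℝ)+1)^(k+1)) + (∑' n : ℕ, (1:ℝ)/(2*(n:ℝ)+2)^(k+1))
      = ∑' n : ℕ, (1:ℝ)/((n:ℝ)+1)^(k+1) := by
    have he : Summable (fun n : ℕ => (1:ℝ)/(((2*n : ℕ):ℝ)+1)^(k+1)) :=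
      hodd.congr fun n => by push_cast; ring_nf
    have ho : Summable (fun n : ℕ => (1:ℝ)/(((2*n+1 : ℕ):ℝ)+1)^(k+1)) :=
      heven.congr fun n => by push_cast; ring_nf
    have := tsum_even_add_odd (f := fun n : ℕ => (1:ℝ)/((n:ℝ)+1)^(k+1)) he ho
    rw [← this]
    congr 1
    · exact tsum_congr fun n => by push_cast; ring_nf
    · exact tsum_congr fun n => by push_cast; ring_nf
  have hE : (∑' n : ℕ, (1:ℝ)/(2*(n:ℝ)+2)^(k+1))
      = (1/2^(k+1)) * ∑' n : ℕ, (1:ℝ)/((n:ℝ)+1)^(k+1) := by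
    rw [← tsum_mul_left]
    refine tsum_congr fun n => ?_
    rw [show (2*(n:ℝ)+2)^(k+1) = 2^(k+1)*((n:ℝ)+1)^(k+1) by rw [← mul_pow]; ring_nf]
    rw [one_div, one_div, one_div, mul_inv]
  have hval : (fun n => ∫ x in Set.Ioo (0:ℝ) 1, F n x)
      = fun n : ℕ => ((-1:ℝ)^k * (k.factorial : ℝ)) * ((1:ℝ)/(2*(n:ℝ)+1)^(k+1))
        - ((-1:ℝ)^k * (k.factorial : ℝ)) * ((1:ℝ)/(2*(n:ℝ)+2)^(k+1)) := by
    funext n; rw [hFval n]; ring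
  rw [hval, Summable.tsum_sub (hodd.mul_left _) (heven.mul_left _), tsum_mul_left, tsum_mul_left]
  have h2k : (2:ℝ)^k ≠ 0 := by positivity
  have h2k1 : (2:ℝ)^(k+1) ≠ 0 := by positivity
  rw [show (∑' n : ℕ, (1:ℝ)/(2*(n:ℝ)+1)^(k+1))
      = (∑' n : ℕ, (1:ℝ)/((n:ℝ)+1)^(k+1)) - ∑' n : ℕ, (1:ℝ)/(2*(n:ℝ)+2)^(k+1) by
        linarith [hOE], hE]
  push_cast
  field_simp
  ring
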